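/- Define the fleet size function s(x) = (2/H)·(L_x/V_d + H·(d̄/V_d)·F(x) + T_l). If x* satisfies F(x*) = (1/H)·(γ_a·V_d·t̄_a/d̄ − (γ_o/γ_t)·V_d − 2·γ_v/γ_t), then the optimal fleet size equals s(x*) = (2/H)·(L_x/V_d + γ_a·t̄_a − (γ_o/γ_t)·d̄ − 2·(γ_v/γ_t)·(d̄/V_d) + T_l); in particular this value is independent of the demand density f. -/
import Mathlib

/-- Result 2 (Eq. (17)): the optimal fleet size, expressed independently of the
x-directional demand distribution. -/
theorem optimal_fleet_size
    (γt γa γo γv ta d H Vd Lx Tl : ℝ)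
    (hγt : 0 < γt) (hγa : 0 < γa) (hγo : 0 < γo) (hγv : 0 < γv)
    (hta : 0 < ta) (hd : 0 < d) (hH : 0 < H) (hVd : 0 < Vd) (hLx : 0 < Lx)
    (hTl : 0 ≤ Tl)
    (f : ℝ → ℝ) (hf : ContinuousOn f (Set.Icc 0 Lx))
    (hfpos : ∀ x ∈ Set.Icc (0:ℝ) Lx, 0 ≤ f x)
    (F : ℝ → ℝ) (hF : ∀ x, F x = ∫ t in (0:ℝ)..x, f t)
    (s : ℝ → ℝ)
    (hs : ∀ x, s x = (2 / H) * (Lx / Vd + H * (d / Vd) * F x + Tl))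
    (xs : ℝ)
    (hxs : F xs = (1 / H) * (γa * Vd * ta / d - (γo / γt) * Vd - 2 * γv / γt)) :
    s xs = (2 / H) * (Lx / Vd + γa * ta - (γo / γt) * d
      - 2 * (γv / γt) * (d / Vd) + Tl) := by
  rw [hs, hxs]
  field_simp
  ring
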